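/- (Strong duality for the CoCo problem) Let A ∈ ℝ^{m × n} be the vertical stack of the matrices A_{d,l} over all modes d and edges l ∈ E_d, and let C = { λ = (λ_{d,l}) : ‖λ_{d,l}‖₂ ≤ γ w_{d,l} for all d, l } ⊆ ℝ^m. Then min_{u ∈ ℝ^n} F_γ(u) = max_{λ ∈ C} { (1/2)‖x‖₂² − (1/2)‖x − Aᵀλ‖₂² }, and the maximum on the right is attained. -/

import Mathlib

open scoped BigOperators
open Finset MeasureTheory Matrix

noncomputable section

/-- The full (vectorized) index set of a `D`-way tensor with mode sizes `n d`. -/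
abbrev TIdx {D : ℕ} (n : Fin D → ℕ) : Type := ∀ d, Fin (n d)

/-- The index set of a mode-`d` subarray: all modes except `d`. -/
abbrev RIdx {D : ℕ} (n : Fin D → ℕ) (d : Fin D) : Type :=
  ∀ d' : {x : Fin D // x ≠ d}, Fin (n d'.1)

/-- Insert the mode-`d` index `i` into the partial index `g`. -/
def insIdx {D : ℕ} (n : Fin D → ℕ) (d : Fin D) (g : RIdx n d) (i : Fin (n d)) : TIdx n :=
  fun d' => if h : d' = d then h.symm ▸ i else g ⟨d', h⟩

/-- The matrix `A_{d,ij} = I ⊗ ⋯ ⊗ (e_i - e_j)ᵀ ⊗ ⋯ ⊗ I`, realized on the canonical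
multi-index sets: applied to `u`, the `g`-th entry is `u(.., i, ..) - u(.., j, ..)`. -/
def Amat {D : ℕ} (n : Fin D → ℕ) (d : Fin D) (i j : Fin (n d)) :
    Matrix (RIdx n d) (TIdx n) ℝ :=
  Matrix.of fun g f =>
    (if f = insIdx n d g i then (1 : ℝ) else 0) - (if f = insIdx n d g j then (1 : ℝ) else 0)

/-- Euclidean (ℓ₂) norm of a finitely-indexed real vector. -/
def l2 {κ : Type*} [Fintype κ] (v : κ → ℝ) : ℝ := Real.sqrt (∑ a, v a ^ 2)

/-- The mode-`d` fusion penalty `R_d(u) = Σ_{i<j} w_{d,ij} ‖A_{d,ij} u‖₂`. -/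
def Rmode {D : ℕ} (n : Fin D → ℕ) (d : Fin D) (w : Fin (n d) → Fin (n d) → ℝ)
    (u : TIdx n → ℝ) : ℝ :=
  ∑ i, ∑ j, if i < j then w i j * l2 ((Amat n d i j).mulVec u) else 0

/-- The CoCo objective `F_γ(u) = (1/2)‖x - u‖₂² + γ Σ_d Σ_{i<j} w_{d,ij} ‖A_{d,ij} u‖₂`. -/
def coco {D : ℕ} (n : Fin D → ℕ) (x : TIdx n → ℝ) (γ : ℝ)
    (w : ∀ d, Fin (n d) → Fin (n d) → ℝ) (u : TIdx n → ℝ) : ℝ :=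
  (1 / 2) * ∑ f, (x f - u f) ^ 2 + γ * ∑ d, Rmode n d (w d) u

/-- The CoCo objective with penalties summed over given edge sets `E_d`:
`F_γ(u) = (1/2)‖x − u‖₂² + γ Σ_d Σ_{l ∈ E_d} w_{d,l} ‖A_{d,l} u‖₂`. -/
def cocoE {D : ℕ} (n : Fin D → ℕ) (E : ∀ d, Finset (Fin (n d) × Fin (n d)))
    (w : ∀ d, Fin (n d) × Fin (n d) → ℝ) (x : TIdx n → ℝ) (γ : ℝ) (u : TIdx n → ℝ) : ℝ :=
  (1 / 2) * ∑ f, (x f - u f) ^ 2 +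
    γ * ∑ d, ∑ l ∈ E d, w d l * l2 ((Amat n d l.1 l.2).mulVec u)

/-- A dual variable: one block `λ_{d,l} ∈ ℝ^{n_{-d}}` for each mode `d` and pair `l`. -/
abbrev DualVar {D : ℕ} (n : Fin D → ℕ) : Type :=
  ∀ d : Fin D, (Fin (n d) × Fin (n d)) → RIdx n d → ℝ

/-- `Aᵀλ = Σ_d Σ_{l ∈ E_d} A_{d,l}ᵀ λ_{d,l}`, the transpose of the stacked matrix applied to a
dual variable. -/
def ATlam {D : ℕ} (n : Fin D → ℕ) (E : ∀ d, Finset (Fin (n d) × Fin (n d)))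
    (lam : DualVar n) : TIdx n → ℝ :=
  fun f => ∑ d, ∑ l ∈ E d, ∑ g, lam d l g * Amat n d l.1 l.2 g f

/-- Membership in the dual feasible set `C`: `‖λ_{d,l}‖₂ ≤ γ w_{d,l}` for every mode `d` and
edge `l ∈ E_d`. -/
def InDualBall {D : ℕ} (n : Fin D → ℕ) (E : ∀ d, Finset (Fin (n d) × Fin (n d)))
    (w : ∀ d, Fin (n d) × Fin (n d) → ℝ) (γ : ℝ) (lam : DualVar n) : Prop :=
  ∀ d, ∀ l ∈ E d, l2 (lam d l) ≤ γ * w d l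

/-- The Lagrangian dual objective `G(λ) = (1/2)‖x‖₂² − (1/2)‖x − Aᵀλ‖₂²`. -/
def dualObj {D : ℕ} (n : Fin D → ℕ) (E : ∀ d, Finset (Fin (n d) × Fin (n d)))
    (x : TIdx n → ℝ) (lam : DualVar n) : ℝ :=
  (1 / 2) * ∑ f, x f ^ 2 - (1 / 2) * ∑ f, (x f - ATlam n E lam f) ^ 2

/-! ### Auxiliary lemmas for the strong duality proof -/

lemma l2_eq_norm' {κ : Type*} [Fintype κ] (v : κ → ℝ) :
    l2 v = ‖(WithLp.equiv 2 (κ → ℝ)).symm v‖ := by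
  simp [l2, EuclideanSpace.norm_eq, sq_abs]

lemma l2_nonneg' {κ : Type*} [Fintype κ] (v : κ → ℝ) : 0 ≤ l2 v := Real.sqrt_nonneg _

lemma l2_sq' {κ : Type*} [Fintype κ] (v : κ → ℝ) : l2 v ^ 2 = ∑ a, v a ^ 2 := by
  rw [l2, Real.sq_sqrt (Finset.sum_nonneg fun a _ => sq_nonneg _)]

lemma l2_zero' {κ : Type*} [Fintype κ] : l2 (0 : κ → ℝ) = 0 := by simp [l2]

lemma l2_eq_zero' {κ : Type*} [Fintype κ] {v : κ → ℝ} (h : l2 v = 0) : v = 0 := by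
  have h1 := l2_sq' v
  rw [h] at h1
  funext a
  have h2 : ∀ a ∈ Finset.univ, (0:ℝ) ≤ v a ^ 2 := fun a _ => sq_nonneg _
  have h3 := (Finset.sum_eq_zero_iff_of_nonneg h2).mp (by linarith) a (Finset.mem_univ a)
  simpa [pow_eq_zero_iff] using h3

lemma l2_smul' {κ : Type*} [Fintype κ] (c : ℝ) (v : κ → ℝ) : l2 (c • v) = |c| * l2 v := by
  rw [l2_eq_norm', l2_eq_norm']
  have h : (WithLp.equiv 2 (κ → ℝ)).symm (c • v) = c • (WithLp.equiv 2 (κ → ℝ)).symm v := by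
    simp
  rw [h, norm_smul]; simp [Real.norm_eq_abs]

lemma l2_add_le' {κ : Type*} [Fintype κ] (a b : κ → ℝ) : l2 (a + b) ≤ l2 a + l2 b := by
  rw [l2_eq_norm', l2_eq_norm', l2_eq_norm']
  have h : (WithLp.equiv 2 (κ → ℝ)).symm (a + b)
      = (WithLp.equiv 2 (κ → ℝ)).symm a + (WithLp.equiv 2 (κ → ℝ)).symm b := by simp
  rw [h]; exact norm_add_le _ _

lemma sum_mul_le_l2' {κ : Type*} [Fintype κ] (a b : κ → ℝ) :
    ∑ i, a i * b i ≤ l2 a * l2 b := by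
  rw [l2_eq_norm', l2_eq_norm']
  have h := real_inner_le_norm ((WithLp.equiv 2 (κ → ℝ)).symm a) ((WithLp.equiv 2 (κ → ℝ)).symm b)
  simpa [PiLp.inner_apply, RCLike.inner_apply, conj_trivial, mul_comm] using h

lemma l2_cont' {κ : Type*} [Fintype κ] : Continuous fun v : κ → ℝ => l2 v := by
  unfold l2
  exact Real.continuous_sqrt.comp (continuous_finset_sum _ fun a _ => (continuous_apply a).pow 2)

lemma l2_abs_le' {κ : Type*} [Fintype κ] (v : κ → ℝ) (a : κ) : |v a| ≤ l2 v := by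
  rw [l2, ← Real.sqrt_sq_eq_abs]
  exact Real.sqrt_le_sqrt (Finset.single_le_sum (fun i _ => sq_nonneg (v i)) (Finset.mem_univ a))

lemma isCompact_l2_ball' {κ : Type*} [Fintype κ] (r : ℝ) :
    IsCompact {v : κ → ℝ | l2 v ≤ r} := by
  apply IsCompact.of_isClosed_subset
      (isCompact_univ_pi fun a : κ => isCompact_Icc (a := -r) (b := r))
  · exact isClosed_le l2_cont' continuous_const
  · intro v hv
    simp only [Set.mem_univ_pi, Set.mem_Icc]
    intro a
    have h := (l2_abs_le' v a).trans hv
    constructor <;> [linarith [neg_abs_le (v a)]; linarith [le_abs_self (v a)]]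

lemma ATlam_line {D : ℕ} (n : Fin D → ℕ) (E : ∀ d, Finset (Fin (n d) × Fin (n d)))
    (a b : DualVar n) (t : ℝ) (f : TIdx n) :
    ATlam n E (a + t • (b - a)) f = ATlam n E a f + t * (ATlam n E b f - ATlam n E a f) := by
  unfold ATlam
  simp only [Pi.add_apply, Pi.smul_apply, Pi.sub_apply, smul_eq_mul, add_mul, sub_mul,
    Finset.sum_add_distrib, mul_assoc, ← Finset.mul_sum, ← Finset.sum_sub_distrib]

lemma adjoint {D : ℕ} (n : Fin D → ℕ) (E : ∀ d, Finset (Fin (n d) × Fin (n d)))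
    (u : TIdx n → ℝ) (lam : DualVar n) :
    ∑ f, u f * ATlam n E lam f
      = ∑ d, ∑ l ∈ E d, ∑ g, lam d l g * (Amat n d l.1 l.2).mulVec u g := by
  unfold ATlam
  simp only [Finset.mul_sum]
  rw [Finset.sum_comm]
  refine Finset.sum_congr rfl fun d _ => ?_
  rw [Finset.sum_comm]
  refine Finset.sum_congr rfl fun l _ => ?_
  rw [Finset.sum_comm]
  refine Finset.sum_congr rfl fun g _ => ?_
  simp only [Matrix.mulVec, dotProduct, Finset.mul_sum]
  exact Finset.sum_congr rfl fun f _ => by ring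

lemma obj_cont {D : ℕ} (n : Fin D → ℕ) (E : ∀ d, Finset (Fin (n d) × Fin (n d)))
    (x : TIdx n → ℝ) :
    Continuous fun lam : DualVar n => ∑ f, (x f - ATlam n E lam f) ^ 2 := by
  apply continuous_finset_sum _ fun f _ => ?_
  apply (Continuous.sub continuous_const ?_).pow 2
  unfold ATlam
  apply continuous_finset_sum _ fun d _ => ?_
  apply continuous_finset_sum _ fun l _ => ?_
  apply continuous_finset_sum _ fun g _ => ?_
  fun_prop

lemma nonpos_of_small (c M : ℝ) (hM : 0 ≤ M)
    (h : ∀ t : ℝ, 0 < t → t ≤ 1 → 2 * (t * c) ≤ t ^ 2 * M) : c ≤ 0 := by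
  by_contra hc
  push_neg at hc
  rcases eq_or_lt_of_le hM with hM0 | hM0
  · have h1 := h 1 one_pos le_rfl; nlinarith
  · have ht0 : 0 < min 1 (c / M) := lt_min one_pos (div_pos hc hM0)
    have h1 := h _ ht0 (min_le_left _ _)
    have h2 : min 1 (c / M) * M ≤ c := (le_div_iff₀ hM0).mp (min_le_right _ _)
    nlinarith [mul_pos ht0 hc]
/-- **strong duality for the CoCo problem.**
`min_u F_γ(u) = max_{λ ∈ C} { (1/2)‖x‖₂² − (1/2)‖x − Aᵀλ‖₂² }`, and both the minimum and the
maximum are attained. -/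
theorem coco_strong_duality
    {D : ℕ} (n : Fin D → ℕ) (E : ∀ d, Finset (Fin (n d) × Fin (n d)))
    (hE : ∀ d, ∀ l ∈ E d, l.1 < l.2)
    (w : ∀ d, Fin (n d) × Fin (n d) → ℝ) (hw : ∀ d, ∀ l ∈ E d, 0 < w d l)
    (x : TIdx n → ℝ) (γ : ℝ) (hγ : 0 ≤ γ) :
    ∃ (uhat : TIdx n → ℝ) (lamhat : DualVar n),
      (∀ u : TIdx n → ℝ, cocoE n E w x γ uhat ≤ cocoE n E w x γ u) ∧
      InDualBall n E w γ lamhat ∧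
      (∀ lam : DualVar n, InDualBall n E w γ lam → dualObj n E x lam ≤ dualObj n E x lamhat) ∧
      cocoE n E w x γ uhat = dualObj n E x lamhat := by
  classical
  have hγw : ∀ d, ∀ l ∈ E d, 0 ≤ γ * w d l := fun d l hl => mul_nonneg hγ (hw d l hl).le
  -- the restricted dual-feasible set
  set S : Set (DualVar n) := Set.univ.pi (fun d => Set.univ.pi (fun l =>
      if l ∈ E d then {v : RIdx n d → ℝ | l2 v ≤ γ * w d l} else {(0 : RIdx n d → ℝ)}))
    with hSdef
  have hmemS : ∀ lam : DualVar n, lam ∈ S ↔ ∀ d, ∀ l : Fin (n d) × Fin (n d),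
      if l ∈ E d then l2 (lam d l) ≤ γ * w d l else lam d l = 0 := by
    intro lam
    rw [hSdef]
    simp only [Set.mem_univ_pi]
    refine forall_congr' fun d => forall_congr' fun l => ?_
    split_ifs <;> simp
  have hScomp : IsCompact S := by
    rw [hSdef]
    refine isCompact_univ_pi fun d => isCompact_univ_pi fun l => ?_
    split_ifs
    · exact isCompact_l2_ball' _
    · exact isCompact_singleton
  have h0S : (0 : DualVar n) ∈ S := by
    rw [hmemS]
    intro d l
    split_ifs with hl
    · simpa [l2_zero'] using hγw d l hl
    · rfl
  obtain ⟨lamhat, hlamS, hminS⟩ :=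
    hScomp.exists_isMinOn ⟨0, h0S⟩ (obj_cont n E x).continuousOn
  have hmin : ∀ lam ∈ S, ∑ f, (x f - ATlam n E lamhat f) ^ 2
      ≤ ∑ f, (x f - ATlam n E lam f) ^ 2 := fun lam hlam => isMinOn_iff.mp hminS lam hlam
  set v : TIdx n → ℝ := ATlam n E lamhat with hv
  set uh : TIdx n → ℝ := fun f => x f - v f with huh
  have huhf : ∀ f, uh f = x f - v f := fun f => rfl
  -- lamhat is dual feasible
  have hball : InDualBall n E w γ lamhat := by
    intro d l hl
    have h := (hmemS lamhat).mp hlamS d l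
    rwa [if_pos hl] at h
  -- variational inequality for the minimizer
  have hvar : ∀ lam ∈ S, ∑ f, uh f * (ATlam n E lam f - v f) ≤ 0 := by
    intro lam hlam
    refine nonpos_of_small _ (∑ f, (ATlam n E lam f - v f) ^ 2)
      (Finset.sum_nonneg fun f _ => sq_nonneg _) fun t ht0 ht1 => ?_
    have hmem : lamhat + t • (lam - lamhat) ∈ S := by
      rw [hmemS]
      intro d l
      have h1 := (hmemS lamhat).mp hlamS d l
      have h2 := (hmemS lam).mp hlam d l
      split_ifs with hl
      · rw [if_pos hl] at h1 h2
        have hcomb : (lamhat + t • (lam - lamhat)) d l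
            = (1 - t) • lamhat d l + t • lam d l := by
          funext g
          simp only [Pi.add_apply, Pi.smul_apply, Pi.sub_apply, smul_eq_mul]
          ring
        rw [hcomb]
        calc l2 ((1 - t) • lamhat d l + t • lam d l)
            ≤ l2 ((1 - t) • lamhat d l) + l2 (t • lam d l) := l2_add_le' _ _
          _ = (1 - t) * l2 (lamhat d l) + t * l2 (lam d l) := by
              rw [l2_smul', l2_smul', abs_of_nonneg (by linarith), abs_of_nonneg ht0.le]
          _ ≤ (1 - t) * (γ * w d l) + t * (γ * w d l) :=
              add_le_add (mul_le_mul_of_nonneg_left h1 (by linarith))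
                (mul_le_mul_of_nonneg_left h2 ht0.le)
          _ = γ * w d l := by ring
      · rw [if_neg hl] at h1 h2
        funext g
        simp [h1, h2]
    have hm := hmin _ hmem
    have hAt : ∀ f, ATlam n E (lamhat + t • (lam - lamhat)) f
        = v f + t * (ATlam n E lam f - v f) := fun f => by
      rw [ATlam_line, hv]
    have hexp : ∑ f, (x f - ATlam n E (lamhat + t • (lam - lamhat)) f) ^ 2
        = ∑ f, (x f - v f) ^ 2 - 2 * (t * ∑ f, uh f * (ATlam n E lam f - v f))
          + t ^ 2 * ∑ f, (ATlam n E lam f - v f) ^ 2 := by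
      rw [Finset.mul_sum, Finset.mul_sum, Finset.mul_sum, ← Finset.sum_sub_distrib,
        ← Finset.sum_add_distrib]
      refine Finset.sum_congr rfl fun f _ => ?_
      rw [hAt f, huhf f]
      ring
    rw [hexp] at hm
    have hxv : ∑ f, (x f - v f) ^ 2 = ∑ f, (x f - ATlam n E lamhat f) ^ 2 := by rw [hv]
    linarith [hm, hxv ▸ hm]
  -- Cauchy–Schwarz bound
  have hCS : ∀ (u : TIdx n → ℝ) (lam : DualVar n), InDualBall n E w γ lam →
      ∑ f, u f * ATlam n E lam f
        ≤ ∑ d, ∑ l ∈ E d, (γ * w d l) * l2 ((Amat n d l.1 l.2).mulVec u) := by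
    intro u lam hlam
    rw [adjoint]
    refine Finset.sum_le_sum fun d _ => Finset.sum_le_sum fun l hl => ?_
    calc ∑ g, lam d l g * (Amat n d l.1 l.2).mulVec u g
        ≤ l2 (lam d l) * l2 ((Amat n d l.1 l.2).mulVec u) := sum_mul_le_l2' _ _
      _ ≤ (γ * w d l) * l2 ((Amat n d l.1 l.2).mulVec u) :=
          mul_le_mul_of_nonneg_right (hlam d l hl) (l2_nonneg' _)
  -- key identity: Σ γ w ‖A uh‖ = ⟨uh, v⟩
  have hkey : ∑ d, ∑ l ∈ E d, (γ * w d l) * l2 ((Amat n d l.1 l.2).mulVec uh)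
      = ∑ f, uh f * v f := by
    apply le_antisymm
    · -- ≤ via the maximizing dual vector mu
      set mu : DualVar n := fun d l =>
        if l ∈ E d then
          (γ * w d l / l2 ((Amat n d l.1 l.2).mulVec uh)) • ((Amat n d l.1 l.2).mulVec uh)
        else 0 with hmu
      have hmuS : mu ∈ S := by
        rw [hmemS]
        intro d l
        split_ifs with hl
        · rw [hmu]
          simp only [if_pos hl]
          rw [l2_smul', abs_of_nonneg (div_nonneg (hγw d l hl) (l2_nonneg' _))]
          by_cases hy : l2 ((Amat n d l.1 l.2).mulVec uh) = 0
          · rw [hy]; simpa using hγw d l hl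
          · rw [div_mul_cancel₀ _ hy]
        · rw [hmu]; simp only [if_neg hl]
      have h2 : ∑ f, uh f * ATlam n E mu f
          = ∑ d, ∑ l ∈ E d, (γ * w d l) * l2 ((Amat n d l.1 l.2).mulVec uh) := by
        rw [adjoint]
        refine Finset.sum_congr rfl fun d _ => Finset.sum_congr rfl fun l hl => ?_
        have hmudl : mu d l
            = (γ * w d l / l2 ((Amat n d l.1 l.2).mulVec uh)) • ((Amat n d l.1 l.2).mulVec uh) := by
          rw [hmu]; simp only [if_pos hl]
        rw [hmudl]
        by_cases hy : l2 ((Amat n d l.1 l.2).mulVec uh) = 0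
        · have hy0 := l2_eq_zero' hy
          simp [hy0, hy, l2_zero']
        · have : ∑ g, ((γ * w d l / l2 ((Amat n d l.1 l.2).mulVec uh))
              • ((Amat n d l.1 l.2).mulVec uh)) g * (Amat n d l.1 l.2).mulVec uh g
              = (γ * w d l / l2 ((Amat n d l.1 l.2).mulVec uh))
                * ∑ g, ((Amat n d l.1 l.2).mulVec uh) g ^ 2 := by
            rw [Finset.mul_sum]
            refine Finset.sum_congr rfl fun g _ => ?_
            simp only [Pi.smul_apply, smul_eq_mul]; ring
          rw [this, ← l2_sq']
          field_simp
      have h1 := hvar mu hmuS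
      have h3 : ∑ f, uh f * (ATlam n E mu f - v f)
          = ∑ f, uh f * ATlam n E mu f - ∑ f, uh f * v f := by
        rw [← Finset.sum_sub_distrib]
        exact Finset.sum_congr rfl fun f _ => by ring
      rw [h3, h2] at h1
      linarith
    · -- ≥ via Cauchy–Schwarz applied to lamhat
      have h4 := hCS uh lamhat hball
      rwa [← hv] at h4
  -- factor γ out
  have hfac : ∀ u : TIdx n → ℝ,
      ∑ d, ∑ l ∈ E d, (γ * w d l) * l2 ((Amat n d l.1 l.2).mulVec u)
        = γ * ∑ d, ∑ l ∈ E d, w d l * l2 ((Amat n d l.1 l.2).mulVec u) := by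
    intro u
    rw [Finset.mul_sum]
    exact Finset.sum_congr rfl fun d _ => by
      rw [Finset.mul_sum]; exact Finset.sum_congr rfl fun l _ => by ring
  -- value of the primal objective at uh
  have hcocouh : cocoE n E w x γ uh = (1 / 2) * ∑ f, v f ^ 2 + ∑ f, uh f * v f := by
    rw [cocoE, ← hfac, hkey]
    congr 1
    congr 1
    exact Finset.sum_congr rfl fun f _ => by rw [huhf f]; ring
  refine ⟨uh, lamhat, ?_, hball, ?_, ?_⟩
  · -- primal optimality
    intro u
    have h1 : ∑ f, u f * v f
        ≤ γ * ∑ d, ∑ l ∈ E d, w d l * l2 ((Amat n d l.1 l.2).mulVec u) := by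
      have := hCS u lamhat hball
      rwa [← hv, hfac] at this
    have h2 : (0:ℝ) ≤ ∑ f, (x f - u f - v f) ^ 2 := Finset.sum_nonneg fun f _ => sq_nonneg _
    have h3 : ∑ f, (x f - u f - v f) ^ 2 + 2 * ∑ f, uh f * v f + ∑ f, v f ^ 2
        = ∑ f, (x f - u f) ^ 2 + 2 * ∑ f, u f * v f := by
      rw [Finset.mul_sum, Finset.mul_sum, ← Finset.sum_add_distrib, ← Finset.sum_add_distrib,
        ← Finset.sum_add_distrib]
      refine Finset.sum_congr rfl fun f _ => ?_
      rw [huhf f]; ring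
    rw [hcocouh, cocoE]
    linarith
  · -- dual optimality
    intro lam hlam
    set lam' : DualVar n := fun d l => if l ∈ E d then lam d l else 0 with hlam'
    have hlam'S : lam' ∈ S := by
      rw [hmemS]
      intro d l
      split_ifs with hl
      · rw [hlam']; simp only [if_pos hl]; exact hlam d l hl
      · rw [hlam']; simp only [if_neg hl]
    have hAeq : ∀ f, ATlam n E lam' f = ATlam n E lam f := by
      intro f
      unfold ATlam
      refine Finset.sum_congr rfl fun d _ => Finset.sum_congr rfl fun l hl => ?_
      refine Finset.sum_congr rfl fun g _ => ?_
      rw [hlam']; simp only [if_pos hl]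
    have h5 := hmin lam' hlam'S
    have h6 : ∑ f, (x f - ATlam n E lam' f) ^ 2 = ∑ f, (x f - ATlam n E lam f) ^ 2 :=
      Finset.sum_congr rfl fun f _ => by rw [hAeq f]
    rw [h6] at h5
    rw [dualObj, dualObj]
    have h7 : ∑ f, (x f - ATlam n E lamhat f) ^ 2 = ∑ f, (x f - v f) ^ 2 := by rw [← hv]
    linarith
  · -- strong duality equality
    rw [hcocouh, dualObj, ← hv]
    have h8 : ∑ f, (x f - v f) ^ 2
        = ∑ f, x f ^ 2 - 2 * ∑ f, x f * v f + ∑ f, v f ^ 2 := by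
      rw [Finset.mul_sum, ← Finset.sum_sub_distrib, ← Finset.sum_add_distrib]
      exact Finset.sum_congr rfl fun f _ => by ring
    have h9 : ∑ f, uh f * v f = ∑ f, x f * v f - ∑ f, v f ^ 2 := by
      rw [← Finset.sum_sub_distrib]
      exact Finset.sum_congr rfl fun f _ => by rw [huhf f]; ring
    rw [h8, h9]
    ring
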